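/- For μ ≥ η > 0 and ν > 0, the new SPEB after adding ranging information satisfies 1/μ < tr((F(μ,η,ϑ) + ν R(φ))⁻¹) ≤ tr(F(μ,η,ϑ)⁻¹) = 1/μ + 1/η for every angle φ. -/

import Mathlib

open Matrix Real

noncomputable def rotM (ϑ : ℝ) : Matrix (Fin 2) (Fin 2) ℝ :=
  !![cos ϑ, -sin ϑ; sin ϑ, cos ϑ]

noncomputable def RDM (φ : ℝ) : Matrix (Fin 2) (Fin 2) ℝ :=
  vecMulVec ![cos φ, sin φ] ![cos φ, sin φ]

noncomputable def Fmat (μ η ϑ : ℝ) : Matrix (Fin 2) (Fin 2) ℝ :=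
  rotM ϑ * Matrix.diagonal ![μ, η] * (rotM ϑ)ᵀ

lemma trace_inv_two (A : Matrix (Fin 2) (Fin 2) ℝ) : A⁻¹.trace = A.det⁻¹ * A.trace := by
  rw [Matrix.inv_def, Matrix.trace_smul, Ring.inverse_eq_inv']
  simp [Matrix.trace_fin_two, Matrix.adjugate_fin_two, mul_add]
  ring

lemma Amat_eq (μ η ϑ ν φ : ℝ) : Fmat μ η ϑ + ν • RDM φ =
    !![cos ϑ^2*μ + sin ϑ^2*η + ν*cos φ^2, cos ϑ*sin ϑ*(μ-η) + ν*cos φ*sin φ;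
       cos ϑ*sin ϑ*(μ-η) + ν*cos φ*sin φ, sin ϑ^2*μ + cos ϑ^2*η + ν*sin φ^2] := by
  have hd : (Matrix.diagonal ![μ, η] : Matrix (Fin 2) (Fin 2) ℝ) = !![μ,0;0,η] := by
    ext i j; fin_cases i <;> fin_cases j <;> simp [Matrix.diagonal]
  ext i j
  fin_cases i <;> fin_cases j <;>
    simp [Fmat, rotM, RDM, hd, Matrix.mul_apply, Fin.sum_univ_two, vecMulVec_apply,
      Matrix.add_apply, Matrix.smul_apply, Matrix.vecHead, Matrix.vecTail,
        Matrix.vecMul, dotProduct, Matrix.transpose_apply] <;> ring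

lemma Fmat_eq (μ η ϑ : ℝ) : Fmat μ η ϑ =
    !![cos ϑ^2*μ + sin ϑ^2*η, cos ϑ*sin ϑ*(μ-η);
       cos ϑ*sin ϑ*(μ-η), sin ϑ^2*μ + cos ϑ^2*η] := by
  have h := Amat_eq μ η ϑ 0 0
  simpa using h

theorem speb_bounds_after_cooperation (μ η ϑ ν : ℝ) (hμη : μ ≥ η) (hη : 0 < η)
    (hν : 0 < ν) (φ : ℝ) :
    1 / μ < ((Fmat μ η ϑ + ν • RDM φ)⁻¹).trace ∧
    ((Fmat μ η ϑ + ν • RDM φ)⁻¹).trace ≤ ((Fmat μ η ϑ)⁻¹).trace ∧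
    ((Fmat μ η ϑ)⁻¹).trace = 1 / μ + 1 / η := by
  have hμ : 0 < μ := lt_of_lt_of_le hη hμη
  have h1 := sin_sq_add_cos_sq ϑ
  have h2 := sin_sq_add_cos_sq φ
  set t : ℝ := cos φ * cos ϑ + sin φ * sin ϑ with ht
  set u : ℝ := sin φ * cos ϑ - cos φ * sin ϑ with hu
  have htu : t^2 + u^2 = 1 := by
    rw [ht, hu]; nlinarith [h1, h2, sq_nonneg (sin ϑ), sq_nonneg (cos ϑ)]
  -- trace and det of A
  have htrA : (Fmat μ η ϑ + ν • RDM φ).trace = μ + η + ν := by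
    rw [Amat_eq]; simp [Matrix.trace_fin_two]
    linear_combination (μ + η) * h1 + ν * h2
  have hdetA : (Fmat μ η ϑ + ν • RDM φ).det = μ*η + ν*μ*u^2 + ν*η*t^2 := by
    rw [Amat_eq]; simp [Matrix.det_fin_two]
    rw [ht, hu]
    linear_combination (μ*η*(sin ϑ^2 + cos ϑ^2 + 1)) * h1
  have htrF : (Fmat μ η ϑ).trace = μ + η := by
    rw [Fmat_eq]; simp [Matrix.trace_fin_two]
    linear_combination (μ + η) * h1
  have hdetF : (Fmat μ η ϑ).det = μ*η := by
    rw [Fmat_eq]; simp [Matrix.det_fin_two]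
    linear_combination (μ*η*(sin ϑ^2 + cos ϑ^2 + 1)) * h1
  have hd : 0 < μ*η + ν*μ*u^2 + ν*η*t^2 := by
    nlinarith [sq_nonneg t, sq_nonneg u, mul_pos hμ hη, mul_pos hν hμ, mul_pos hν hη]
  have htrAinv : ((Fmat μ η ϑ + ν • RDM φ)⁻¹).trace
      = (μ + η + ν) / (μ*η + ν*μ*u^2 + ν*η*t^2) := by
    rw [trace_inv_two, htrA, hdetA, inv_mul_eq_div]
  have htrFinv : ((Fmat μ η ϑ)⁻¹).trace = (μ + η) / (μ*η) := by
    rw [trace_inv_two, htrF, hdetF, inv_mul_eq_div]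
  refine ⟨?_, ?_, ?_⟩
  · rw [htrAinv, div_lt_div_iff₀ hμ hd]
    have key : μ*(μ + η + ν) - (μ*η + ν*μ*u^2 + ν*η*t^2) = μ^2 + ν*(μ-η)*t^2 := by
      linear_combination (-(ν*μ)) * htu
    nlinarith [mul_nonneg (mul_nonneg hν.le (sub_nonneg.2 hμη)) (sq_nonneg t), mul_pos hμ hμ]
  · rw [htrAinv, htrFinv, div_le_div_iff₀ hd (mul_pos hμ hη)]
    have key : (μ+η)*(μ*η + ν*μ*u^2 + ν*η*t^2) - (μ+η+ν)*(μ*η)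
        = ν*(μ*u)^2 + ν*(η*t)^2 := by
      linear_combination (μ*η*ν) * htu
    nlinarith [mul_nonneg hν.le (sq_nonneg (μ*u)), mul_nonneg hν.le (sq_nonneg (η*t))]
  · rw [htrFinv]; field_simp; ring
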